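/- For integers 0 ≤ 2s ≤ L, the polynomial [L choose s]_q - [L choose s-1]_q equals q^{n(λ')} (q;q)_L / H_λ(q) where λ = (2^s, 1^{L-2s}), n(λ') = s, and H_λ(q) = ∏_{x∈λ}(1 - q^{h(x)}) is the hook-length polynomial; equivalently [L choose s]_q - [L choose s-1]_q = q^s (q;q)_L (1 - q^{L-2s+1}) / ((q;q)_s (q;q)_{L-s+1}). -/

import Mathlib

open PowerSeries Finset

noncomputable def qPoch (n : ℕ) : PowerSeries ℚ :=
  ∏ k ∈ Finset.range n, (1 - (X : PowerSeries ℚ) ^ (k + 1))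

noncomputable def gauss (L : ℕ) (s : ℤ) : PowerSeries ℚ :=
  if 0 ≤ s ∧ s ≤ (L : ℤ) then
    qPoch L * (qPoch s.toNat)⁻¹ * (qPoch (L - s.toNat))⁻¹
  else 0

/-- Row lengths (0-indexed) of the partition `λ = (2^s, 1^{L-2s})`. -/
def rowLen (L s i : ℕ) : ℕ := if i < s then 2 else if i < L - s then 1 else 0

/-- Column lengths of `λ = (2^s, 1^{L-2s})`. -/
def colLen (L s j : ℕ) : ℕ :=
  ((Finset.range (L - s)).filter (fun i => j < rowLen L s i)).card

/-- The hook length of the cell `(i, j)` (0-indexed) of `λ = (2^s, 1^{L-2s})`. -/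
def hookLen (L s i j : ℕ) : ℕ := (rowLen L s i - j) + (colLen L s j - i) - 1

/-- The hook-length polynomial `H_λ(q) = ∏_{x ∈ λ} (1 - q^{h(x)})` for
`λ = (2^s, 1^{L-2s})`. -/
noncomputable def Hpoly (L s : ℕ) : PowerSeries ℚ :=
  ∏ i ∈ Finset.range (L - s), ∏ j ∈ Finset.range (rowLen L s i),
    (1 - (X : PowerSeries ℚ) ^ (hookLen L s i j))

lemma cc_qPoch (n : ℕ) : constantCoeff (qPoch n) = 1 := by
  rw [qPoch, map_prod]
  apply Finset.prod_eq_one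
  intro k _
  simp [map_pow]

lemma qPoch_succ (n : ℕ) : qPoch (n + 1) = qPoch n * (1 - (X : PowerSeries ℚ) ^ (n + 1)) :=
  Finset.prod_range_succ _ n

lemma qPoch_inv_succ (n : ℕ) :
    (qPoch n)⁻¹ = (1 - (X : PowerSeries ℚ) ^ (n + 1)) * (qPoch (n + 1))⁻¹ := by
  rw [PowerSeries.eq_mul_inv_iff_mul_eq (by rw [cc_qPoch]; norm_num), qPoch_succ,
    ← mul_assoc, PowerSeries.inv_mul_cancel _ (by rw [cc_qPoch]; norm_num), one_mul]

lemma col0 (s m : ℕ) : colLen (2 * s + m) s 0 = s + m := by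
  have hs : 2 * s + m - s = s + m := by omega
  rw [colLen, hs, Finset.filter_true_of_mem, Finset.card_range]
  intro i hi
  rw [Finset.mem_range] at hi
  simp only [rowLen, hs]
  split_ifs <;> omega

lemma col1 (s m : ℕ) : colLen (2 * s + m) s 1 = s := by
  have hs : 2 * s + m - s = s + m := by omega
  rw [colLen, hs]
  have : (Finset.range (s + m)).filter (fun i => 1 < rowLen (2 * s + m) s i)
      = Finset.range s := by
    ext i
    simp only [Finset.mem_filter, Finset.mem_range, rowLen, hs]
    split_ifs <;> omega
  rw [this, Finset.card_range]

lemma row_lt (s m i : ℕ) (hi : i < s) : rowLen (2 * s + m) s i = 2 := by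
  simp [rowLen, hi]

lemma row_ge (s m t : ℕ) (ht : t < m) : rowLen (2 * s + m) s (s + t) = 1 := by
  have hs : 2 * s + m - s = s + m := by omega
  simp only [rowLen, hs]
  split_ifs <;> omega

lemma hook1 (s m i : ℕ) (hi : i < s) : hookLen (2 * s + m) s i 0 = s + m + 1 - i := by
  rw [hookLen, col0, row_lt s m i hi]; omega

lemma hook2 (s m i : ℕ) (hi : i < s) : hookLen (2 * s + m) s i 1 = s - i := by
  rw [hookLen, col1, row_lt s m i hi]; omega

lemma hook3 (s m t : ℕ) (ht : t < m) : hookLen (2 * s + m) s (s + t) 0 = m - t := by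
  rw [hookLen, col0, row_ge s m t ht]; omega

lemma Hpoly_eq (s m : ℕ) : Hpoly (2 * s + m) s =
    (∏ i ∈ Finset.range s,
      ((1 - (X : PowerSeries ℚ) ^ (s + m + 1 - i)) * (1 - (X : PowerSeries ℚ) ^ (s - i)))) *
    ∏ t ∈ Finset.range m, (1 - (X : PowerSeries ℚ) ^ (m - t)) := by
  have hs : 2 * s + m - s = s + m := by omega
  rw [Hpoly, hs, Finset.prod_range_add]
  congr 1
  · apply Finset.prod_congr rfl
    intro i hi
    rw [Finset.mem_range] at hi
    rw [row_lt s m i hi, Finset.prod_range_succ, Finset.prod_range_one,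
      hook1 s m i hi, hook2 s m i hi]
  · apply Finset.prod_congr rfl
    intro t ht
    rw [Finset.mem_range] at ht
    rw [row_ge s m t ht, Finset.prod_range_one, hook3 s m t ht]

lemma key_H (s m : ℕ) :
    Hpoly (2 * s + m) s * (1 - (X : PowerSeries ℚ) ^ (m + 1))
      = qPoch s * qPoch (s + m + 1) := by
  have hB : qPoch s = ∏ i ∈ Finset.range s, (1 - (X : PowerSeries ℚ) ^ (s - i)) := by
    rw [qPoch, ← Finset.prod_range_reflect (fun k => 1 - (X : PowerSeries ℚ) ^ (k + 1)) s]
    apply Finset.prod_congr rfl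
    intro i hi
    rw [Finset.mem_range] at hi
    have e : s - 1 - i + 1 = s - i := by omega
    rw [e]
  have hC : qPoch m = ∏ t ∈ Finset.range m, (1 - (X : PowerSeries ℚ) ^ (m - t)) := by
    rw [qPoch, ← Finset.prod_range_reflect (fun k => 1 - (X : PowerSeries ℚ) ^ (k + 1)) m]
    apply Finset.prod_congr rfl
    intro t ht
    rw [Finset.mem_range] at ht
    have e : m - 1 - t + 1 = m - t := by omega
    rw [e]
  have hA : qPoch (s + m + 1) = qPoch m * (1 - (X : PowerSeries ℚ) ^ (m + 1)) *
      ∏ i ∈ Finset.range s, (1 - (X : PowerSeries ℚ) ^ (s + m + 1 - i)) := by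
    have h2 : (∏ i ∈ Finset.range s, (1 - (X : PowerSeries ℚ) ^ (s + m + 1 - i)))
        = ∏ i ∈ Finset.range s, (1 - (X : PowerSeries ℚ) ^ (m + 1 + i + 1)) := by
      rw [← Finset.prod_range_reflect (fun i => 1 - (X : PowerSeries ℚ) ^ (m + 1 + i + 1)) s]
      apply Finset.prod_congr rfl
      intro i hi
      rw [Finset.mem_range] at hi
      have e : m + 1 + (s - 1 - i) + 1 = s + m + 1 - i := by omega
      rw [e]
    rw [h2, show s + m + 1 = (m + 1) + s by omega, qPoch, Finset.prod_range_add,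
      Finset.prod_range_succ]
    rfl
  rw [Hpoly_eq, Finset.prod_mul_distrib, hA, ← hB, ← hC]
  ring

lemma cc_Hpoly (s m : ℕ) : constantCoeff (Hpoly (2 * s + m) s) = 1 := by
  have := congrArg (constantCoeff : PowerSeries ℚ →+* ℚ) (key_H s m)
  rw [map_mul, map_mul, cc_qPoch, cc_qPoch] at this
  have h2 : constantCoeff (1 - (X : PowerSeries ℚ) ^ (m + 1)) = 1 := by
    simp [map_pow]
  rw [h2, mul_one, one_mul] at this
  exact this

lemma gauss_nat (L s : ℕ) (h : s ≤ L) :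
    gauss L s = qPoch L * (qPoch s)⁻¹ * (qPoch (L - s))⁻¹ := by
  rw [gauss, if_pos ⟨Int.natCast_nonneg s, by exact_mod_cast h⟩, Int.toNat_natCast]

theorem stmt14 (L s : ℕ) (h : 2 * s ≤ L) :
    gauss L s - gauss L ((s : ℤ) - 1) = (X : PowerSeries ℚ) ^ s * qPoch L * (Hpoly L s)⁻¹ ∧
      gauss L s - gauss L ((s : ℤ) - 1) =
        (X : PowerSeries ℚ) ^ s * qPoch L * (1 - (X : PowerSeries ℚ) ^ (L - 2 * s + 1)) *
          (qPoch s)⁻¹ * (qPoch (L - s + 1))⁻¹ := by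
  obtain ⟨m, rfl⟩ := Nat.exists_eq_add_of_le h
  have e1 : 2 * s + m - 2 * s = m := by omega
  have e2 : 2 * s + m - s = s + m := by omega
  have e3 : 2 * s + m - s + 1 = s + m + 1 := by omega
  have key2 : gauss (2 * s + m) s - gauss (2 * s + m) ((s : ℤ) - 1) =
      (X : PowerSeries ℚ) ^ s * qPoch (2 * s + m) * (1 - (X : PowerSeries ℚ) ^ (m + 1)) *
        (qPoch s)⁻¹ * (qPoch (s + m + 1))⁻¹ := by
    rcases Nat.eq_zero_or_pos s with rfl | hs
    · have hneg : gauss (2 * 0 + m) (((0 : ℕ) : ℤ) - 1) = 0 := by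
        rw [gauss, if_neg]; push_neg; intro h'; omega
      have h0 : qPoch 0 = 1 := Finset.prod_range_zero _
      rw [hneg, sub_zero, gauss_nat _ 0 (Nat.zero_le _), h0, inv_one,
        show 2 * 0 + m = m by omega, show m - 0 = m by omega]
      simp only [pow_zero, one_mul, mul_one, Nat.zero_add]
      rw [PowerSeries.mul_inv_cancel _ (by rw [cc_qPoch]; norm_num), ← qPoch_succ,
        PowerSeries.mul_inv_cancel _ (by rw [cc_qPoch]; norm_num)]
    · have hc : ((s : ℤ) - 1) = ((s - 1 : ℕ) : ℤ) := by omega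
      rw [hc, gauss_nat _ s (by omega), gauss_nat _ (s - 1) (by omega), e2]
      have e4 : 2 * s + m - (s - 1) = s + m + 1 := by omega
      rw [e4]
      have h5 : (qPoch (s + m))⁻¹ =
          (1 - (X : PowerSeries ℚ) ^ (s + m + 1)) * (qPoch (s + m + 1))⁻¹ :=
        qPoch_inv_succ (s + m)
      have h6 : (qPoch (s - 1))⁻¹ = (1 - (X : PowerSeries ℚ) ^ s) * (qPoch s)⁻¹ := by
        have := qPoch_inv_succ (s - 1)
        rw [show s - 1 + 1 = s by omega] at this
        exact this
      rw [h5, h6]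
      have hpow : (X : PowerSeries ℚ) ^ s * (X : PowerSeries ℚ) ^ (m + 1)
          = (X : PowerSeries ℚ) ^ (s + m + 1) := by
        ring
      rw [← hpow]
      ring
  constructor
  · rw [key2]
    have hinv : (Hpoly (2 * s + m) s)⁻¹ =
        (1 - (X : PowerSeries ℚ) ^ (m + 1)) * (qPoch s)⁻¹ * (qPoch (s + m + 1))⁻¹ := by
      symm
      rw [PowerSeries.eq_inv_iff_mul_eq_one (by rw [cc_Hpoly]; norm_num)]
      have : (1 - (X : PowerSeries ℚ) ^ (m + 1)) * (qPoch s)⁻¹ * (qPoch (s + m + 1))⁻¹ *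
          Hpoly (2 * s + m) s = (qPoch s)⁻¹ * (qPoch (s + m + 1))⁻¹ *
            (Hpoly (2 * s + m) s * (1 - (X : PowerSeries ℚ) ^ (m + 1))) := by ring
      rw [this, key_H, show (qPoch s)⁻¹ * (qPoch (s + m + 1))⁻¹ * (qPoch s * qPoch (s + m + 1))
          = ((qPoch s)⁻¹ * qPoch s) * ((qPoch (s + m + 1))⁻¹ * qPoch (s + m + 1)) by ring,
        PowerSeries.inv_mul_cancel _ (by rw [cc_qPoch]; norm_num),
        PowerSeries.inv_mul_cancel _ (by rw [cc_qPoch]; norm_num), one_mul]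
    rw [hinv]
    ring
  · rw [key2, e1, e3]
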